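/- Let θ : ℝⁿ → ℝ be convex and continuous, X ⊆ ℝⁿ nonempty closed convex, A ∈ ℝ^{m×n}, b ∈ ℝᵐ, β > 0, δ > 0, α ∈ (0,2), set M = (1/β)AAᵀ + δIₘ, and suppose Ω* is nonempty. Let {wᵏ} = {(xᵏ, λᵏ)} and {w̄ᵏ} = {(x̄ᵏ, λ̄ᵏ)} be generated from any w⁰ ∈ X × ℝᵐ by the scheme: λ̄ᵏ satisfies Axᵏ − b + M(λ̄ᵏ − λᵏ) = 0, x̄ᵏ ∈ argmin{θ(x) + (β/2)‖x − [xᵏ + (1/β)Aᵀ(2λ̄ᵏ − λᵏ)]‖² : x ∈ X}, and wᵏ⁺¹ = wᵏ − α(wᵏ − w̄ᵏ). Then {wᵏ} converges to some w^∞ ∈ Ω*. -/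

import Mathlib

open Matrix Set Filter

lemma dot_self_nonneg' {n : ℕ} (u : Fin n → ℝ) : 0 ≤ u ⬝ᵥ u :=
  Finset.sum_nonneg fun _ _ => mul_self_nonneg _

lemma dot_expand {n : ℕ} (a b d e : Fin n → ℝ) (c : ℝ) :
    (a - c • b) ⬝ᵥ (d - c • e) =
      a ⬝ᵥ d - c * (a ⬝ᵥ e) - c * (b ⬝ᵥ d) + c ^ 2 * (b ⬝ᵥ e) := by
  simp [dotProduct_sub, sub_dotProduct, dotProduct_smul, smul_dotProduct, smul_eq_mul]
  ring

lemma dot_split {n : ℕ} (a b : Fin n → ℝ) :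
    a ⬝ᵥ a ≤ 2 * ((a - b) ⬝ᵥ (a - b)) + 2 * (b ⬝ᵥ b) := by
  have h1 := dot_self_nonneg' (a - (2:ℝ) • b)
  rw [dot_expand] at h1
  have h2 : (a - b) ⬝ᵥ (a - b) = a ⬝ᵥ a - (a ⬝ᵥ b) - (b ⬝ᵥ a) + (b ⬝ᵥ b) := by
    have := dot_expand a b a b 1
    simpa using this
  rw [h2]; linarith

lemma aux_cs {m n : ℕ} (A : Matrix (Fin m) (Fin n) ℝ) (v : Fin m → ℝ) :
    (Aᵀ *ᵥ v) ⬝ᵥ (Aᵀ *ᵥ v) ≤ (∑ i, ∑ j, (A i j) ^ 2) * (v ⬝ᵥ v) := by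
  have h : ∀ j : Fin n, ((Aᵀ *ᵥ v) j) * ((Aᵀ *ᵥ v) j) ≤ (∑ i, (A i j) ^ 2) * (v ⬝ᵥ v) := by
    intro j
    have := Finset.sum_mul_sq_le_sq_mul_sq Finset.univ (fun i => A i j) v
    simpa [Matrix.mulVec, dotProduct, Matrix.transpose_apply, ← sq,
      mul_comm] using this
  calc (Aᵀ *ᵥ v) ⬝ᵥ (Aᵀ *ᵥ v) = ∑ j, ((Aᵀ *ᵥ v) j) * ((Aᵀ *ᵥ v) j) := rfl
    _ ≤ ∑ j : Fin n, (∑ i, (A i j) ^ 2) * (v ⬝ᵥ v) := Finset.sum_le_sum fun j _ => h j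
    _ = (∑ i, ∑ j, (A i j) ^ 2) * (v ⬝ᵥ v) := by
        rw [Finset.sum_comm, ← Finset.sum_mul]

lemma tendsto_dot {n : ℕ} {f g : ℕ → Fin n → ℝ} {a b : Fin n → ℝ}
    (hf : Tendsto f atTop (nhds a)) (hg : Tendsto g atTop (nhds b)) :
    Tendsto (fun k => f k ⬝ᵥ g k) atTop (nhds (a ⬝ᵥ b)) := by
  have : ∀ i, Tendsto (fun k => f k i * g k i) atTop (nhds (a i * b i)) := fun i =>
    (tendsto_pi_nhds.1 hf i).mul (tendsto_pi_nhds.1 hg i)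
  exact tendsto_finset_sum _ fun i _ => this i

lemma tendsto_mulVec {m n : ℕ} (A : Matrix (Fin m) (Fin n) ℝ) {g : ℕ → Fin n → ℝ}
    {b : Fin n → ℝ} (hg : Tendsto g atTop (nhds b)) :
    Tendsto (fun k => A *ᵥ g k) atTop (nhds (A *ᵥ b)) := by
  rw [tendsto_pi_nhds]
  intro i
  exact tendsto_dot (f := fun _ => A i) tendsto_const_nhds hg

/-- The H-bilinear form for the balanced ALM. -/
def hinD {n m : ℕ} (A : Matrix (Fin m) (Fin n) ℝ) (M : Matrix (Fin m) (Fin m) ℝ) (β : ℝ)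
    (u : Fin n → ℝ) (v : Fin m → ℝ) (u' : Fin n → ℝ) (v' : Fin m → ℝ) : ℝ :=
  β * (u ⬝ᵥ u') - u ⬝ᵥ (Aᵀ *ᵥ v') - u' ⬝ᵥ (Aᵀ *ᵥ v) + v ⬝ᵥ (M *ᵥ v')

lemma hin_expand {n m : ℕ} (A : Matrix (Fin m) (Fin n) ℝ) (M : Matrix (Fin m) (Fin m) ℝ)
    (β c : ℝ) (hMs : ∀ v w : Fin m → ℝ, v ⬝ᵥ (M *ᵥ w) = w ⬝ᵥ (M *ᵥ v))
    (u u' : Fin n → ℝ) (v v' : Fin m → ℝ) :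
    hinD A M β (u - c • u') (v - c • v') (u - c • u') (v - c • v') =
      hinD A M β u v u v - 2 * c * hinD A M β u v u' v'
        + c ^ 2 * hinD A M β u' v' u' v' := by
  simp only [hinD, Matrix.mulVec_sub, Matrix.mulVec_smul]
  rw [dot_expand, dot_expand, dot_expand, dotProduct_comm u' u, hMs v' v]
  ring

lemma hin_first {n m : ℕ} (A : Matrix (Fin m) (Fin n) ℝ) (M : Matrix (Fin m) (Fin m) ℝ)
    (β : ℝ) (a u' : Fin n → ℝ) (bb v' : Fin m → ℝ) :
    hinD A M β (-(a - u')) (-(bb - v')) u' v' =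
      hinD A M β u' v' u' v' - hinD A M β a bb u' v' := by
  simp only [hinD, Matrix.mulVec_neg, Matrix.mulVec_sub, neg_dotProduct, sub_dotProduct,
    dotProduct_neg, dotProduct_sub]
  ring

lemma skew_sum {n m : ℕ} (A : Matrix (Fin m) (Fin n) ℝ) (b : Fin m → ℝ)
    (u u' : Fin n → ℝ) (v v' : Fin m → ℝ) :
    (u - u') ⬝ᵥ (-(Aᵀ *ᵥ v)) + (u' - u) ⬝ᵥ (-(Aᵀ *ᵥ v')) + (v' - v) ⬝ᵥ (A *ᵥ u' - b)
      + (v - v') ⬝ᵥ (A *ᵥ u - b) = 0 := by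
  have h1 : ∀ (w : Fin m → ℝ) (a : Fin n → ℝ), w ⬝ᵥ (A *ᵥ a) = a ⬝ᵥ (Aᵀ *ᵥ w) := by
    intro w a
    rw [Matrix.dotProduct_mulVec, ← Matrix.mulVec_transpose, dotProduct_comm]
  simp only [sub_dotProduct, dotProduct_sub, dotProduct_neg, h1, Matrix.mulVec_sub,
    Matrix.mulVec_neg, Matrix.mulVec_add, dotProduct_add]
  ring

lemma tendsto_hinD {n m : ℕ} (A : Matrix (Fin m) (Fin n) ℝ) (M : Matrix (Fin m) (Fin m) ℝ)
    (β : ℝ) {f f' : ℕ → Fin n → ℝ} {g g' : ℕ → Fin m → ℝ} {a a' : Fin n → ℝ}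
    {bb bb' : Fin m → ℝ}
    (hf : Tendsto f atTop (nhds a)) (hg : Tendsto g atTop (nhds bb))
    (hf' : Tendsto f' atTop (nhds a')) (hg' : Tendsto g' atTop (nhds bb')) :
    Tendsto (fun k => hinD A M β (f k) (g k) (f' k) (g' k)) atTop
      (nhds (hinD A M β a bb a' bb')) := by
  simp only [hinD]
  exact ((((tendsto_dot hf hf').const_mul β).sub (tendsto_dot hf (tendsto_mulVec Aᵀ hg'))).sub
    (tendsto_dot hf' (tendsto_mulVec Aᵀ hg))).add (tendsto_dot hg (tendsto_mulVec M hg'))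

/-- VI characterization of the minimizer of `θ + (β/2)‖· - p‖²` over a convex set. -/
lemma aux_minVI {n : ℕ} (θ : (Fin n → ℝ) → ℝ) (hθ : ConvexOn ℝ Set.univ θ)
    (X : Set (Fin n → ℝ)) (hXconv : Convex ℝ X) (β : ℝ) (hβ : 0 < β)
    (p xb : Fin n → ℝ) (hxb : xb ∈ X)
    (hmin : ∀ z ∈ X, θ xb + (β / 2) * ((xb - p) ⬝ᵥ (xb - p)) ≤
      θ z + (β / 2) * ((z - p) ⬝ᵥ (z - p)))
    (z : Fin n → ℝ) (hz : z ∈ X) :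
    θ z - θ xb + (z - xb) ⬝ᵥ (β • (xb - p)) ≥ 0 := by
  have key : ∀ t : ℝ, 0 < t → t ≤ 1 →
      θ xb - θ z ≤ β * ((xb - p) ⬝ᵥ (z - xb)) + (β / 2) * t * ((z - xb) ⬝ᵥ (z - xb)) := by
    intro t ht ht1
    have hzt : xb + t • (z - xb) ∈ X := by
      have := hXconv hxb hz (by linarith : (0:ℝ) ≤ 1 - t) (le_of_lt ht) (by ring)
      convert this using 1
      simp [smul_sub, sub_smul]
      module
    have hconv : θ (xb + t • (z - xb)) ≤ (1 - t) * θ xb + t * θ z := by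
      have := hθ.2 (Set.mem_univ xb) (Set.mem_univ z) (by linarith : (0:ℝ) ≤ 1 - t)
        (le_of_lt ht) (by ring)
      have heq : xb + t • (z - xb) = (1 - t) • xb + t • z := by module
      rw [heq]; simpa [smul_eq_mul] using this
    have hm := hmin _ hzt
    have hqexp : (xb + t • (z - xb) - p) ⬝ᵥ (xb + t • (z - xb) - p) =
        (xb - p) ⬝ᵥ (xb - p) + 2 * t * ((xb - p) ⬝ᵥ (z - xb))
          + t ^ 2 * ((z - xb) ⬝ᵥ (z - xb)) := by
      have h0 : xb + t • (z - xb) - p = (xb - p) - (-t) • (z - xb) := by module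
      rw [h0, dot_expand]
      rw [dotProduct_comm (z - xb) (xb - p)]
      ring
    nlinarith [hm, hconv, hqexp]
  by_contra hcon
  push_neg at hcon
  have hsmul : (z - xb) ⬝ᵥ (β • (xb - p)) = β * ((xb - p) ⬝ᵥ (z - xb)) := by
    rw [dotProduct_smul, dotProduct_comm]; simp [smul_eq_mul]
  set c : ℝ := θ xb - θ z - β * ((xb - p) ⬝ᵥ (z - xb)) with hc
  have hcpos : 0 < c := by rw [hc]; rw [hsmul] at hcon; linarith
  set Q : ℝ := (β / 2) * ((z - xb) ⬝ᵥ (z - xb)) with hQ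
  have hQ0 : 0 ≤ Q := mul_nonneg (by linarith) (dot_self_nonneg' _)
  set t : ℝ := min 1 (c / (2 * (Q + 1))) with htdef
  have hQ1 : 0 < Q + 1 := by linarith
  have ht : 0 < t := lt_min one_pos (div_pos hcpos (by linarith))
  have ht1 : t ≤ 1 := min_le_left _ _
  have hkey := key t ht ht1
  have hQt : (β / 2) * t * ((z - xb) ⬝ᵥ (z - xb)) = t * Q := by rw [hQ]; ring
  rw [hQt] at hkey
  have htle : t ≤ c / (2 * (Q + 1)) := min_le_right _ _
  have hge : t * Q ≥ c := by linarith
  have h2 : t * Q ≤ (c / (2 * (Q + 1))) * Q := mul_le_mul_of_nonneg_right htle hQ0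
  have h3 : (c / (2 * (Q + 1))) * Q < c := by
    rw [div_mul_eq_mul_div, div_lt_iff₀ (by linarith)]
    nlinarith
  linarith

/-- A nonneg., nonincreasing real sequence with a subsequence tending to 0 tends to 0. -/
lemma aux_mono_subseq (a : ℕ → ℝ) (hdec : ∀ k, a (k + 1) ≤ a k) (hpos : ∀ k, 0 ≤ a k)
    (φ : ℕ → ℕ) (hφ : StrictMono φ) (hsub : Tendsto (fun j => a (φ j)) atTop (nhds 0)) :
    Tendsto a atTop (nhds 0) := by
  have hanti : Antitone a := antitone_nat_of_succ_le hdec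
  rw [Metric.tendsto_atTop] at hsub ⊢
  intro ε hε
  obtain ⟨N, hN⟩ := hsub ε hε
  refine ⟨φ N, fun k hk => ?_⟩
  have h1 := hN N le_rfl
  simp only [Real.dist_eq, sub_zero] at h1 ⊢
  have h2 : a k ≤ a (φ N) := hanti hk
  rw [abs_of_nonneg (hpos _)] at h1 ⊢
  linarith

/-- If `u k ⬝ᵥ u k → 0` then `u k → 0`. -/
lemma aux_dot_tendsto {n : ℕ} (u : ℕ → Fin n → ℝ)
    (h : Tendsto (fun k => u k ⬝ᵥ u k) atTop (nhds 0)) :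
    Tendsto u atTop (nhds 0) := by
  rw [tendsto_pi_nhds]
  intro i
  have hsq : Tendsto (fun k => |u k i|) atTop (nhds 0) := by
    have h0 : Tendsto (fun k => Real.sqrt (u k ⬝ᵥ u k)) atTop (nhds 0) := by
      simpa [Function.comp_def] using (Real.continuous_sqrt.tendsto 0).comp h
    apply squeeze_zero (fun k => abs_nonneg _) (fun k => ?_) h0
    have hle : (u k i) * (u k i) ≤ u k ⬝ᵥ u k :=
      Finset.single_le_sum (f := fun j => u k j * u k j)
        (fun j _ => mul_self_nonneg _) (Finset.mem_univ i)
    calc |u k i| = Real.sqrt (u k i * u k i) := by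
          rw [Real.sqrt_mul_self_eq_abs]
      _ ≤ Real.sqrt (u k ⬝ᵥ u k) := Real.sqrt_le_sqrt hle
  simpa using tendsto_zero_iff_abs_tendsto_zero _ |>.2 hsq

lemma norm_le_sqrt_dot {n : ℕ} (u : Fin n → ℝ) {c : ℝ} (h : u ⬝ᵥ u ≤ c) :
    ‖u‖ ≤ Real.sqrt c := by
  rw [pi_norm_le_iff_of_nonneg (Real.sqrt_nonneg _)]
  intro i
  rw [Real.norm_eq_abs, ← Real.sqrt_sq_eq_abs]
  apply Real.sqrt_le_sqrt
  calc u i ^ 2 = u i * u i := sq (u i)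
    _ ≤ u ⬝ᵥ u := Finset.single_le_sum (f := fun j => u j * u j)
        (fun j _ => mul_self_nonneg _) (Finset.mem_univ i)
    _ ≤ c := h

/-- Fejér-type recursion facts. -/
lemma aux_fejer (a s : ℕ → ℝ) (γ : ℝ) (hγ : 0 < γ) (hdec : ∀ k, a (k+1) ≤ a k - γ * s k)
    (ha : ∀ k, 0 ≤ a k) (hs : ∀ k, 0 ≤ s k) :
    Tendsto s atTop (nhds 0) ∧ ∀ k, a k ≤ a 0 := by
  have hsum : ∀ N, γ * (∑ k ∈ Finset.range N, s k) + a N ≤ a 0 := by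
    intro N; induction N with
    | zero => simp
    | succ N ih =>
      rw [Finset.sum_range_succ, mul_add]
      have := hdec N; linarith
  constructor
  · have hsm : Summable s := by
      refine summable_of_sum_range_le (c := a 0 / γ) hs fun N => ?_
      rw [le_div_iff₀ hγ]
      have h1 := hsum N; have h2 := ha N; nlinarith
    exact hsm.tendsto_atTop_zero
  · intro k; induction k with
    | zero => exact le_rfl
    | succ k ih =>
      have := hdec k
      nlinarith [hs k, mul_nonneg hγ.le (hs k)]

theorem stmt_13 {n m : ℕ} (θ : (Fin n → ℝ) → ℝ) (hθ : ConvexOn ℝ Set.univ θ)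
    (hθc : Continuous θ)
    (X : Set (Fin n → ℝ)) (hXne : X.Nonempty) (hXclosed : IsClosed X) (hXconv : Convex ℝ X)
    (A : Matrix (Fin m) (Fin n) ℝ) (b : Fin m → ℝ) (β δ α : ℝ) (hβ : 0 < β) (hδ : 0 < δ)
    (hα : α ∈ Set.Ioo (0 : ℝ) 2)
    (hsol : ∃ xstar ∈ X, ∃ lstar : Fin m → ℝ, ∀ x ∈ X, ∀ lam : Fin m → ℝ,
      θ x - θ xstar + (x - xstar) ⬝ᵥ (-(Aᵀ *ᵥ lstar)) + (lam - lstar) ⬝ᵥ (A *ᵥ xstar - b) ≥ 0)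
    (x xbar : ℕ → Fin n → ℝ) (l lbar : ℕ → Fin m → ℝ)
    (hx0 : x 0 ∈ X)
    (hdual : ∀ k : ℕ, A *ᵥ x k - b +
      (((1 / β) • (A * Aᵀ) + δ • (1 : Matrix (Fin m) (Fin m) ℝ)) *ᵥ (lbar k - l k)) = 0)
    (hprimal : ∀ k : ℕ, xbar k ∈ X ∧ ∀ z ∈ X,
      θ (xbar k) + (β / 2) *
        ((xbar k - (x k + (1 / β) • (Aᵀ *ᵥ ((2 : ℝ) • lbar k - l k)))) ⬝ᵥ
         (xbar k - (x k + (1 / β) • (Aᵀ *ᵥ ((2 : ℝ) • lbar k - l k))))) ≤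
      θ z + (β / 2) *
        ((z - (x k + (1 / β) • (Aᵀ *ᵥ ((2 : ℝ) • lbar k - l k)))) ⬝ᵥ
         (z - (x k + (1 / β) • (Aᵀ *ᵥ ((2 : ℝ) • lbar k - l k))))))
    (hupdx : ∀ k : ℕ, x (k + 1) = x k - α • (x k - xbar k))
    (hupdl : ∀ k : ℕ, l (k + 1) = l k - α • (l k - lbar k)) :
    ∃ xinf ∈ X, ∃ linf : Fin m → ℝ,
      (∀ z ∈ X, ∀ lam : Fin m → ℝ,
        θ z - θ xinf + (z - xinf) ⬝ᵥ (-(Aᵀ *ᵥ linf)) + (lam - linf) ⬝ᵥ (A *ᵥ xinf - b) ≥ 0) ∧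
      Tendsto x atTop (nhds xinf) ∧ Tendsto l atTop (nhds linf) := by
  obtain ⟨hα0, hα2⟩ := hα
  obtain ⟨xs, hxs, ls, hstar⟩ := hsol
  set M : Matrix (Fin m) (Fin m) ℝ := (1 / β) • (A * Aᵀ) + δ • (1 : Matrix (Fin m) (Fin m) ℝ)
    with hMdef
  -- basic algebraic facts
  have hAdj : ∀ (w : Fin m → ℝ) (a : Fin n → ℝ), w ⬝ᵥ (A *ᵥ a) = a ⬝ᵥ (Aᵀ *ᵥ w) := by
    intro w a
    rw [Matrix.dotProduct_mulVec, ← Matrix.mulVec_transpose, dotProduct_comm]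
  have hMv : ∀ v : Fin m → ℝ, M *ᵥ v = (1 / β) • (A *ᵥ (Aᵀ *ᵥ v)) + δ • v := by
    intro v
    rw [hMdef, Matrix.add_mulVec, Matrix.smul_mulVec, Matrix.smul_mulVec,
      Matrix.one_mulVec, ← Matrix.mulVec_mulVec]
  have hMs : ∀ v w : Fin m → ℝ, v ⬝ᵥ (M *ᵥ w) = w ⬝ᵥ (M *ᵥ v) := by
    intro v w
    rw [hMv, hMv]
    simp only [dotProduct_add, dotProduct_smul, smul_eq_mul]
    rw [hAdj v (Aᵀ *ᵥ w), hAdj w (Aᵀ *ᵥ v), dotProduct_comm (Aᵀ *ᵥ w) (Aᵀ *ᵥ v),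
      dotProduct_comm v w]
  set K : ℝ := ∑ i, ∑ j, (A i j) ^ 2 with hKdef
  have hK0 : 0 ≤ K := Finset.sum_nonneg fun _ _ => Finset.sum_nonneg fun _ _ => sq_nonneg _
  -- positive definiteness decomposition of the H-form
  have hseq : ∀ (u : Fin n → ℝ) (v : Fin m → ℝ), hinD A M β u v u v =
      β * ((u - (1/β) • (Aᵀ *ᵥ v)) ⬝ᵥ (u - (1/β) • (Aᵀ *ᵥ v))) + δ * (v ⬝ᵥ v) := by
    intro u v
    have h1 : v ⬝ᵥ (M *ᵥ v) = (1/β) * ((Aᵀ *ᵥ v) ⬝ᵥ (Aᵀ *ᵥ v)) + δ * (v ⬝ᵥ v) := by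
      rw [hMv]
      simp only [dotProduct_add, dotProduct_smul, smul_eq_mul]
      rw [hAdj v (Aᵀ *ᵥ v)]
    simp only [hinD]
    rw [dot_expand, h1, dotProduct_comm (Aᵀ *ᵥ v) u]
    field_simp
    ring
  have hs_nonneg : ∀ (u : Fin n → ℝ) (v : Fin m → ℝ), 0 ≤ hinD A M β u v u v := by
    intro u v
    rw [hseq]
    exact add_nonneg (mul_nonneg hβ.le (dot_self_nonneg' _))
      (mul_nonneg hδ.le (dot_self_nonneg' _))
  have hvsq : ∀ (u : Fin n → ℝ) (v : Fin m → ℝ), δ * (v ⬝ᵥ v) ≤ hinD A M β u v u v := by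
    intro u v
    rw [hseq]
    nlinarith [mul_nonneg hβ.le (dot_self_nonneg' (u - (1/β) • (Aᵀ *ᵥ v)))]
  have husq : ∀ (u : Fin n → ℝ) (v : Fin m → ℝ),
      u ⬝ᵥ u ≤ (2/β) * hinD A M β u v u v + (2*K/β^2) * (v ⬝ᵥ v) := by
    intro u v
    have hqn : 0 ≤ (u - (1/β) • (Aᵀ *ᵥ v)) ⬝ᵥ (u - (1/β) • (Aᵀ *ᵥ v)) := dot_self_nonneg' _
    have hvn : 0 ≤ v ⬝ᵥ v := dot_self_nonneg' _
    have hsplit := dot_split u ((1/β) • (Aᵀ *ᵥ v))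
    have hcc : ((1/β) • (Aᵀ *ᵥ v)) ⬝ᵥ ((1/β) • (Aᵀ *ᵥ v)) =
        (1/β)^2 * ((Aᵀ *ᵥ v) ⬝ᵥ (Aᵀ *ᵥ v)) := by
      simp [smul_dotProduct, dotProduct_smul, smul_eq_mul]; ring
    have hcs := aux_cs A v
    rw [← hKdef] at hcs
    have heq := hseq u v
    have e1 : (2/β) * hinD A M β u v u v =
        2 * ((u - (1/β) • (Aᵀ *ᵥ v)) ⬝ᵥ (u - (1/β) • (Aᵀ *ᵥ v))) + (2*δ/β) * (v ⬝ᵥ v) := by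
      rw [heq]; field_simp
    have h3 : ((1/β) • (Aᵀ *ᵥ v)) ⬝ᵥ ((1/β) • (Aᵀ *ᵥ v)) ≤ (1/β)^2 * (K * (v ⬝ᵥ v)) := by
      rw [hcc]
      exact mul_le_mul_of_nonneg_left hcs (sq_nonneg (1/β))
    have h4 : 2 * ((1/β)^2 * (K * (v ⬝ᵥ v))) = (2*K/β^2) * (v ⬝ᵥ v) := by
      field_simp
    have h5 : 0 ≤ (2*δ/β) * (v ⬝ᵥ v) := mul_nonneg (by positivity) hvn
    linarith
  -- the dual update as an equation
  have hAxb : ∀ k, A *ᵥ x k - b = M *ᵥ (l k - lbar k) := by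
    intro k
    have h := hdual k
    have h2 : A *ᵥ x k - b = -(M *ᵥ (lbar k - l k)) := by
      rw [eq_neg_iff_add_eq_zero]; exact h
    rw [h2, ← Matrix.mulVec_neg, neg_sub]
  -- the fundamental VI for the predictor
  have hVI : ∀ k, ∀ z ∈ X, ∀ lam : Fin m → ℝ,
      θ z - θ (xbar k) + (z - xbar k) ⬝ᵥ (-(Aᵀ *ᵥ lbar k)) + (lam - lbar k) ⬝ᵥ (A *ᵥ xbar k - b)
        ≥ hinD A M β (z - xbar k) (lam - lbar k) (x k - xbar k) (l k - lbar k) := by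
    intro k z hz lam
    obtain ⟨hxbX, hmin⟩ := hprimal k
    have h1 := aux_minVI θ hθ X hXconv β hβ
      (x k + (1 / β) • (Aᵀ *ᵥ ((2:ℝ) • lbar k - l k))) (xbar k) hxbX hmin z hz
    have hvec : β • (xbar k - (x k + (1 / β) • (Aᵀ *ᵥ ((2:ℝ) • lbar k - l k)))) =
        (-β) • (x k - xbar k) - Aᵀ *ᵥ lbar k + Aᵀ *ᵥ (l k - lbar k) := by
      have h2 : (2:ℝ) • lbar k - l k = lbar k - (l k - lbar k) := by module
      rw [h2, Matrix.mulVec_sub]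
      rw [show xbar k - (x k + (1/β) • (Aᵀ *ᵥ lbar k - Aᵀ *ᵥ (l k - lbar k))) =
          (xbar k - x k) - (1/β) • (Aᵀ *ᵥ lbar k - Aᵀ *ᵥ (l k - lbar k)) from by abel]
      rw [smul_sub β, smul_smul, mul_one_div_cancel hβ.ne', one_smul]
      module
    have e1 : (z - xbar k) ⬝ᵥ (β • (xbar k - (x k + (1/β) • (Aᵀ *ᵥ ((2:ℝ) • lbar k - l k))))) =
        -β * ((z - xbar k) ⬝ᵥ (x k - xbar k)) - (z - xbar k) ⬝ᵥ (Aᵀ *ᵥ lbar k)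
          + (z - xbar k) ⬝ᵥ (Aᵀ *ᵥ (l k - lbar k)) := by
      rw [hvec]
      simp only [dotProduct_sub, dotProduct_add, dotProduct_smul, smul_eq_mul] <;> ring
    have e2 : (lam - lbar k) ⬝ᵥ (A *ᵥ xbar k - b) =
        -((x k - xbar k) ⬝ᵥ (Aᵀ *ᵥ (lam - lbar k))) + (lam - lbar k) ⬝ᵥ (M *ᵥ (l k - lbar k)) := by
      have hvec2 : A *ᵥ xbar k - b = A *ᵥ (xbar k - x k) + M *ᵥ (l k - lbar k) := by
        rw [Matrix.mulVec_sub, ← hAxb k]; abel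
      rw [hvec2, dotProduct_add, hAdj (lam - lbar k) (xbar k - x k)]
      rw [show xbar k - x k = -(x k - xbar k) from (neg_sub _ _).symm, neg_dotProduct]
    have e3 : (z - xbar k) ⬝ᵥ (-(Aᵀ *ᵥ lbar k)) = -((z - xbar k) ⬝ᵥ (Aᵀ *ᵥ lbar k)) :=
      dotProduct_neg _ _
    simp only [hinD]
    rw [e3, e2]
    linarith [h1, e1]
  -- combination with a solution of the VI problem
  have hkey : ∀ ys : Fin n → ℝ, ys ∈ X → ∀ ws : Fin m → ℝ,
      (∀ z ∈ X, ∀ lam : Fin m → ℝ,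
        θ z - θ ys + (z - ys) ⬝ᵥ (-(Aᵀ *ᵥ ws)) + (lam - ws) ⬝ᵥ (A *ᵥ ys - b) ≥ 0) →
      ∀ k, hinD A M β (x k - ys) (l k - ws) (x k - xbar k) (l k - lbar k) ≥
        hinD A M β (x k - xbar k) (l k - lbar k) (x k - xbar k) (l k - lbar k) := by
    intro ys hys ws hws k
    have h1 := hVI k ys hys ws
    have h2 := hws (xbar k) (hprimal k).1 (lbar k)
    have h3 := skew_sum A b ys (xbar k) (lbar k) ws
    have h4 : hinD A M β (ys - xbar k) (ws - lbar k) (x k - xbar k) (l k - lbar k) ≤ 0 := by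
      linarith [h1, h2, h3]
    rw [show ys - xbar k = -((x k - ys) - (x k - xbar k)) from by abel,
      show ws - lbar k = -((l k - ws) - (l k - lbar k)) from by abel, hin_first] at h4
    linarith
  -- contraction
  have hcontr : ∀ ys : Fin n → ℝ, ys ∈ X → ∀ ws : Fin m → ℝ,
      (∀ z ∈ X, ∀ lam : Fin m → ℝ,
        θ z - θ ys + (z - ys) ⬝ᵥ (-(Aᵀ *ᵥ ws)) + (lam - ws) ⬝ᵥ (A *ᵥ ys - b) ≥ 0) →
      ∀ k, hinD A M β (x (k+1) - ys) (l (k+1) - ws) (x (k+1) - ys) (l (k+1) - ws) ≤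
        hinD A M β (x k - ys) (l k - ws) (x k - ys) (l k - ws)
          - (α * (2 - α)) * hinD A M β (x k - xbar k) (l k - lbar k)
              (x k - xbar k) (l k - lbar k) := by
    intro ys hys ws hws k
    have hx1 : x (k+1) - ys = (x k - ys) - α • (x k - xbar k) := by rw [hupdx k]; abel
    have hl1 : l (k+1) - ws = (l k - ws) - α • (l k - lbar k) := by rw [hupdl k]; abel
    rw [hx1, hl1, hin_expand A M β α hMs]
    have hk := hkey ys hys ws hws k
    have hmul := mul_le_mul_of_nonneg_left hk (by positivity : (0:ℝ) ≤ 2 * α)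
    nlinarith [hmul]
  have hγ : 0 < α * (2 - α) := mul_pos hα0 (by linarith)
  -- Fejér monotonicity w.r.t. the given solution
  obtain ⟨hs0, haB⟩ := aux_fejer
    (fun k => hinD A M β (x k - xs) (l k - ls) (x k - xs) (l k - ls))
    (fun k => hinD A M β (x k - xbar k) (l k - lbar k) (x k - xbar k) (l k - lbar k))
    (α * (2 - α)) hγ (fun k => hcontr xs hxs ls hstar k)
    (fun k => hs_nonneg _ _) (fun k => hs_nonneg _ _)
  -- squeeze: H-norm to zero implies both components to zero
  have hsqz : ∀ (u : ℕ → Fin n → ℝ) (v : ℕ → Fin m → ℝ),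
      Tendsto (fun k => hinD A M β (u k) (v k) (u k) (v k)) atTop (nhds 0) →
      Tendsto u atTop (nhds 0) ∧ Tendsto v atTop (nhds 0) := by
    intro u v h
    have hv2 : Tendsto (fun k => v k ⬝ᵥ v k) atTop (nhds 0) := by
      apply squeeze_zero (fun k => dot_self_nonneg' _) (fun k => ?_)
        (g := fun k => hinD A M β (u k) (v k) (u k) (v k) / δ)
      · simpa using h.div_const δ
      · rw [le_div_iff₀ hδ]
        have := hvsq (u k) (v k); linarith [this]
    have hu2 : Tendsto (fun k => u k ⬝ᵥ u k) atTop (nhds 0) := by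
      apply squeeze_zero (fun k => dot_self_nonneg' _) (fun k => husq (u k) (v k))
      have := (h.const_mul (2/β)).add (hv2.const_mul (2*K/β^2))
      simpa using this
    exact ⟨aux_dot_tendsto u hu2, aux_dot_tendsto v hv2⟩
  obtain ⟨hdx0, hdl0⟩ := hsqz (fun k => x k - xbar k) (fun k => l k - lbar k) hs0
  -- boundedness of the iterates
  have hlB : ∀ k, (l k - ls) ⬝ᵥ (l k - ls) ≤
      hinD A M β (x 0 - xs) (l 0 - ls) (x 0 - xs) (l 0 - ls) / δ := by
    intro k
    rw [le_div_iff₀ hδ]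
    have h1 := hvsq (x k - xs) (l k - ls)
    have h2 := haB k
    nlinarith
  have hxB : ∀ k, (x k - xs) ⬝ᵥ (x k - xs) ≤
      (2/β) * hinD A M β (x 0 - xs) (l 0 - ls) (x 0 - xs) (l 0 - ls)
        + (2*K/β^2) * (hinD A M β (x 0 - xs) (l 0 - ls) (x 0 - xs) (l 0 - ls) / δ) := by
    intro k
    have h1 := husq (x k - xs) (l k - ls)
    have h2 := hlB k
    have h3 := haB k
    have h4 : (2/β) * hinD A M β (x k - xs) (l k - ls) (x k - xs) (l k - ls) ≤
        (2/β) * hinD A M β (x 0 - xs) (l 0 - ls) (x 0 - xs) (l 0 - ls) :=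
      mul_le_mul_of_nonneg_left h3 (by positivity)
    have h5 : (2*K/β^2) * ((l k - ls) ⬝ᵥ (l k - ls)) ≤
        (2*K/β^2) * (hinD A M β (x 0 - xs) (l 0 - ls) (x 0 - xs) (l 0 - ls) / δ) :=
      mul_le_mul_of_nonneg_left h2 (div_nonneg (by linarith) (by positivity))
    linarith
  -- compactness: a convergent subsequence of the pair sequence
  set a0 : ℝ := hinD A M β (x 0 - xs) (l 0 - ls) (x 0 - xs) (l 0 - ls) with ha0def
  set Bx : ℝ := Real.sqrt ((2/β) * a0 + (2*K/β^2) * (a0 / δ)) + ‖xs‖ with hBx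
  set Bl : ℝ := Real.sqrt (a0 / δ) + ‖ls‖ with hBl
  have hwmem : ∀ k, ((x k, l k) : (Fin n → ℝ) × (Fin m → ℝ)) ∈
      Metric.closedBall (0 : (Fin n → ℝ) × (Fin m → ℝ)) (max Bx Bl) := by
    intro k
    rw [Metric.mem_closedBall, dist_zero_right, Prod.norm_def]
    apply max_le_max
    · calc ‖x k‖ = ‖(x k - xs) + xs‖ := by rw [sub_add_cancel]
        _ ≤ ‖x k - xs‖ + ‖xs‖ := norm_add_le _ _
        _ ≤ Real.sqrt ((2/β) * a0 + (2*K/β^2) * (a0 / δ)) + ‖xs‖ := by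
            have := norm_le_sqrt_dot (x k - xs) (hxB k)
            linarith
    · calc ‖l k‖ = ‖(l k - ls) + ls‖ := by rw [sub_add_cancel]
        _ ≤ ‖l k - ls‖ + ‖ls‖ := norm_add_le _ _
        _ ≤ Real.sqrt (a0 / δ) + ‖ls‖ := by
            have := norm_le_sqrt_dot (l k - ls) (hlB k)
            linarith
  obtain ⟨wlim, _, φ, hφmono, hwtend⟩ :=
    tendsto_subseq_of_bounded Metric.isBounded_closedBall hwmem
  have hφtop : Tendsto φ atTop atTop := hφmono.tendsto_atTop
  have hxφ : Tendsto (fun j => x (φ j)) atTop (nhds wlim.1) :=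
    ((continuous_fst.tendsto wlim).comp hwtend)
  have hlφ : Tendsto (fun j => l (φ j)) atTop (nhds wlim.2) :=
    ((continuous_snd.tendsto wlim).comp hwtend)
  have hdxφ : Tendsto (fun j => x (φ j) - xbar (φ j)) atTop (nhds 0) := hdx0.comp hφtop
  have hdlφ : Tendsto (fun j => l (φ j) - lbar (φ j)) atTop (nhds 0) := hdl0.comp hφtop
  have hxbφ : Tendsto (fun j => xbar (φ j)) atTop (nhds wlim.1) := by
    have heq : (fun j => xbar (φ j)) = fun j => x (φ j) - (x (φ j) - xbar (φ j)) := by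
      funext j; abel
    rw [heq]
    simpa using hxφ.sub hdxφ
  have hlbφ : Tendsto (fun j => lbar (φ j)) atTop (nhds wlim.2) := by
    have heq : (fun j => lbar (φ j)) = fun j => l (φ j) - (l (φ j) - lbar (φ j)) := by
      funext j; abel
    rw [heq]
    simpa using hlφ.sub hdlφ
  have hxinfX : wlim.1 ∈ X :=
    hXclosed.mem_of_tendsto hxbφ (Filter.Eventually.of_forall fun j => (hprimal (φ j)).1)
  -- the limit point solves the VI
  have hVIinf : ∀ z ∈ X, ∀ lam : Fin m → ℝ,
      θ z - θ wlim.1 + (z - wlim.1) ⬝ᵥ (-(Aᵀ *ᵥ wlim.2)) + (lam - wlim.2) ⬝ᵥ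
        (A *ᵥ wlim.1 - b) ≥ 0 := by
    intro z hz lam
    have hL : Tendsto (fun j => θ z - θ (xbar (φ j))
        + (z - xbar (φ j)) ⬝ᵥ (-(Aᵀ *ᵥ lbar (φ j)))
        + (lam - lbar (φ j)) ⬝ᵥ (A *ᵥ xbar (φ j) - b)) atTop
        (nhds (θ z - θ wlim.1 + (z - wlim.1) ⬝ᵥ (-(Aᵀ *ᵥ wlim.2))
          + (lam - wlim.2) ⬝ᵥ (A *ᵥ wlim.1 - b))) := by
      refine Tendsto.add (Tendsto.add
        (tendsto_const_nhds.sub ((hθc.tendsto wlim.1).comp hxbφ)) ?_) ?_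
      · exact tendsto_dot (tendsto_const_nhds.sub hxbφ) (tendsto_mulVec Aᵀ hlbφ).neg
      · exact tendsto_dot (tendsto_const_nhds.sub hlbφ)
          ((tendsto_mulVec A hxbφ).sub tendsto_const_nhds)
    have hR : Tendsto (fun j => hinD A M β (z - xbar (φ j)) (lam - lbar (φ j))
        (x (φ j) - xbar (φ j)) (l (φ j) - lbar (φ j))) atTop (nhds 0) := by
      have := tendsto_hinD A M β ((tendsto_const_nhds (x := z)).sub hxbφ)
        ((tendsto_const_nhds (x := lam)).sub hlbφ) hdxφ hdlφ
      simpa [hinD] using this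
    have := le_of_tendsto_of_tendsto' hR hL (fun j => hVI (φ j) z hz lam)
    linarith
  -- full convergence to the limit point
  have hd' : ∀ k, hinD A M β (x (k+1) - wlim.1) (l (k+1) - wlim.2)
      (x (k+1) - wlim.1) (l (k+1) - wlim.2) ≤
      hinD A M β (x k - wlim.1) (l k - wlim.2) (x k - wlim.1) (l k - wlim.2) := by
    intro k
    have h1 := hcontr wlim.1 hxinfX wlim.2 hVIinf k
    have h2 := mul_nonneg hγ.le (hs_nonneg (x k - xbar k) (l k - lbar k))
    linarith
  have hsub0 : Tendsto (fun j => hinD A M β (x (φ j) - wlim.1) (l (φ j) - wlim.2)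
      (x (φ j) - wlim.1) (l (φ j) - wlim.2)) atTop (nhds 0) := by
    have h1 : Tendsto (fun j => x (φ j) - wlim.1) atTop (nhds 0) := by
      simpa using hxφ.sub (tendsto_const_nhds (x := wlim.1))
    have h2 : Tendsto (fun j => l (φ j) - wlim.2) atTop (nhds 0) := by
      simpa using hlφ.sub (tendsto_const_nhds (x := wlim.2))
    have := tendsto_hinD A M β h1 h2 h1 h2
    simpa [hinD] using this
  have hfull : Tendsto (fun k => hinD A M β (x k - wlim.1) (l k - wlim.2)
      (x k - wlim.1) (l k - wlim.2)) atTop (nhds 0) :=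
    aux_mono_subseq _ hd' (fun k => hs_nonneg _ _) φ hφmono hsub0
  obtain ⟨hex, hel⟩ := hsqz (fun k => x k - wlim.1) (fun k => l k - wlim.2) hfull
  have hxconv : Tendsto x atTop (nhds wlim.1) := by
    have := hex.add (tendsto_const_nhds (x := wlim.1))
    simpa using this
  have hlconv : Tendsto l atTop (nhds wlim.2) := by
    have := hel.add (tendsto_const_nhds (x := wlim.2))
    simpa using this
  exact ⟨wlim.1, hxinfX, wlim.2, hVIinf, hxconv, hlconv⟩
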